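/- Let E be a real inner product space, let x_0, …, x_k ∈ E, and let c be a point of the convex hull of {x_0, …, x_k} such that ‖c − x_i‖ = R for every i (for some R ≥ 0). If x ∈ E satisfies ‖x − x_i‖ ≤ r for every i, then ‖x − c‖² ≤ r² − R². (This is the paper's Lemma 8.2: every point of the common intersection of the balls of radius r around the x_i lies within distance √(r² − R²) of the common circumcenter c.) -/

import Mathlib

open Finset

/-- **Lemma 8.2.** Let `E` be a real inner product space, `x₀, …, x_k ∈ E`, and let `c`
be a point of the convex hull of `{x₀, …, x_k}` with `‖c - xᵢ‖ = R` for every `i`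
(for some `R ≥ 0`). If `x ∈ E` satisfies `‖x - xᵢ‖ ≤ r` for every `i`, then
`‖x - c‖² ≤ r² - R²`. -/
theorem norm_sub_circumcenter_sq_le {E : Type*} [NormedAddCommGroup E]
    [InnerProductSpace ℝ E] {k : ℕ} (x : Fin (k + 1) → E) (c : E) (R r : ℝ)
    (hR : 0 ≤ R)
    (hc : c ∈ convexHull ℝ (Set.range x))
    (hcR : ∀ i, ‖c - x i‖ = R)
    (y : E) (hy : ∀ i, ‖y - x i‖ ≤ r) :
    ‖y - c‖ ^ 2 ≤ r ^ 2 - R ^ 2 := by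
  have hr : 0 ≤ r := le_trans (norm_nonneg _) (hy 0)
  rw [convexHull_range_eq_exists_affineCombination] at hc
  obtain ⟨s, w, hw0, hw1, hcw⟩ := hc
  have hc_eq : c = ∑ i ∈ s, w i • x i := by
    rw [← hcw, affineCombination_eq_linear_combination s x w hw1]
  have hsum0 : ∑ i ∈ s, w i • (c - x i) = 0 := by
    simp only [smul_sub, Finset.sum_sub_distrib, ← Finset.sum_smul, hw1, one_smul]
    rw [← hc_eq, sub_self]
  have key : ∀ i, ‖y - x i‖ ^ 2
      = ‖y - c‖ ^ 2 + 2 * inner ℝ (y - c) (c - x i) + R ^ 2 := by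
    intro i
    have h : y - x i = (y - c) + (c - x i) := by abel
    rw [h, norm_add_sq_real, hcR]
  have h2 : ∑ i ∈ s, w i * (2 * inner ℝ (y - c) (c - x i))
      = 2 * (inner ℝ (y - c) (∑ i ∈ s, w i • (c - x i)) : ℝ) := by
    rw [inner_sum, Finset.mul_sum]
    exact Finset.sum_congr rfl fun i _ => by rw [real_inner_smul_right]; ring
  have hmain : ‖y - c‖ ^ 2 + R ^ 2 = ∑ i ∈ s, w i * ‖y - x i‖ ^ 2 := by
    simp only [key, mul_add]
    rw [Finset.sum_add_distrib, Finset.sum_add_distrib, ← Finset.sum_mul, hw1, one_mul,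
      h2, hsum0, inner_zero_right, mul_zero, add_zero, ← Finset.sum_mul, hw1, one_mul]
  have hle : ∑ i ∈ s, w i * ‖y - x i‖ ^ 2 ≤ r ^ 2 := by
    calc ∑ i ∈ s, w i * ‖y - x i‖ ^ 2 ≤ ∑ i ∈ s, w i * r ^ 2 :=
          Finset.sum_le_sum fun i hi => mul_le_mul_of_nonneg_left
            (pow_le_pow_left₀ (norm_nonneg _) (hy i) 2) (hw0 i hi)
      _ = r ^ 2 := by rw [← Finset.sum_mul, hw1, one_mul]
  linarith
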